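/- In a preferential attachment random caterpillar tree with m ≥ 3 spine vertices, for distinct interior vertices 2 ≤ i ≠ j ≤ m-1, the covariance Cov(D_{i,n}, D_{j,n}) = -(n^2 + 2(m-1)n) / ((m-1)^2 (2m-1)); for i an endpoint and j interior, Cov(D_{i,n}, D_{j,n}) = -(n^2 + 2(m-1)n) / (2(m-1)^2 (2m-1)); and for the two endpoints, Cov(D_{1,n}, D_{m,n}) = -(n^2 + 2(m-1)n) / (4(m-1)^2 (2m-1)). -/

import Mathlib

open Finset Filter MeasureTheory

/-- Number of leaves attached to spine vertex `i` after the choice sequence `ω`. -/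
def leafCount {m n : ℕ} (ω : Fin n → Fin m) (i : Fin m) : ℕ :=
  (Finset.univ.filter fun k => ω k = i).card

/-- Number of times vertex `i` was chosen strictly before step `k`. -/
def countBefore {m n : ℕ} (ω : Fin n → Fin m) (i : Fin m) (k : Fin n) : ℕ :=
  (Finset.univ.filter fun j => j < k ∧ ω j = i).card

/-- Probability of a particular choice sequence `ω` in the (preferential-attachment /
Pólya-Eggenberger) urn with initial composition `τ`: at each step a vertex (color) is
chosen with probability proportional to its current count. -/
noncomputable def seqProb {m n : ℕ} (τ : Fin m → ℕ) (ω : Fin n → Fin m) : ℝ :=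
  ∏ k : Fin n,
    (((τ (ω k) + countBefore ω (ω k) k : ℕ) : ℝ) / (((∑ i, τ i) + (k : ℕ) : ℕ) : ℝ))

/-- Initial degrees on the spine: 1 at both endpoints, 2 in the interior. -/
def spineInit (m : ℕ) : Fin m → ℕ := fun i => if i.val = 0 ∨ i.val = m - 1 then 1 else 2

/-- Degree of spine vertex `i` after the choice sequence `ω`. -/
def deg {m n : ℕ} (τ : Fin m → ℕ) (ω : Fin n → Fin m) (i : Fin m) : ℕ :=
  τ i + leafCount ω i

/-- Expected degree of spine vertex `i` at time `n` in the preferential attachment RCT. -/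
noncomputable def degExp (m n : ℕ) (i : Fin m) : ℝ :=
  ∑ ω : Fin n → Fin m, seqProb (spineInit m) ω * (deg (spineInit m) ω i : ℝ)

/-- Expected squared degree of spine vertex `i` at time `n`. -/
noncomputable def degSqExp (m n : ℕ) (i : Fin m) : ℝ :=
  ∑ ω : Fin n → Fin m, seqProb (spineInit m) ω * ((deg (spineInit m) ω i : ℝ)) ^ 2

/-- Expected mixed moment `E[D_{i,n} D_{j,n}]`. -/
noncomputable def degMixed (m n : ℕ) (i j : Fin m) : ℝ :=
  ∑ ω : Fin n → Fin m,
    seqProb (spineInit m) ω * ((deg (spineInit m) ω i : ℝ) * (deg (spineInit m) ω j : ℝ))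

section aux
variable {m n : ℕ}

lemma leafCount_cons (a : Fin m) (ω : Fin n → Fin m) (i : Fin m) :
    leafCount (Fin.cons a ω) i = (if a = i then 1 else 0) + leafCount ω i := by
  unfold leafCount
  rw [Finset.card_filter, Finset.card_filter, Fin.sum_univ_succ]
  simp [Fin.cons_zero, Fin.cons_succ]

lemma countBefore_cons_zero (a : Fin m) (ω : Fin n → Fin m) (i : Fin m) :
    countBefore (Fin.cons a ω) i 0 = 0 := by
  unfold countBefore
  simp

lemma countBefore_cons_succ (a : Fin m) (ω : Fin n → Fin m) (i : Fin m) (k : Fin n) :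
    countBefore (Fin.cons a ω) i k.succ = (if a = i then 1 else 0) + countBefore ω i k := by
  unfold countBefore
  rw [Finset.card_filter, Finset.card_filter, Fin.sum_univ_succ]
  simp [Fin.cons_zero, Fin.cons_succ, Fin.succ_lt_succ_iff, Fin.succ_pos]

lemma sum_update (τ : Fin m → ℕ) (a : Fin m) :
    ∑ x, (τ x + if x = a then 1 else 0) = (∑ x, τ x) + 1 := by
  rw [Finset.sum_add_distrib]
  simp

lemma seqProb_cons (τ : Fin m → ℕ) (a : Fin m) (ω : Fin n → Fin m) :
    seqProb τ (Fin.cons a ω) =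
      ((τ a : ℝ) / ((∑ x, τ x : ℕ) : ℝ)) *
        seqProb (fun x => τ x + if x = a then 1 else 0) ω := by
  unfold seqProb
  rw [Fin.prod_univ_succ]
  congr 1
  · simp [countBefore_cons_zero]
  · apply Finset.prod_congr rfl
    intro k _
    rw [Fin.cons_succ, countBefore_cons_succ, sum_update]
    congr 2
    · rcases eq_or_ne a (ω k) with h | h
      · simp [h, eq_comm]; omega
      · simp [h, Ne.symm h]
    · push_cast [Fin.val_succ]
      ring

lemma deg_cons (τ : Fin m → ℕ) (a : Fin m) (ω : Fin n → Fin m) (i : Fin m) :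
    deg τ (Fin.cons a ω) i = deg (fun x => τ x + if x = a then 1 else 0) ω i := by
  unfold deg
  rw [leafCount_cons]
  rcases eq_or_ne a i with h | h
  · simp [h]; omega
  · simp [h, Ne.symm h]

lemma sum_pi_succ (f : (Fin (n+1) → Fin m) → ℝ) :
    ∑ ω : Fin (n+1) → Fin m, f ω = ∑ a : Fin m, ∑ ω : Fin n → Fin m, f (Fin.cons a ω) := by
  rw [← (Fintype.sum_equiv (Fin.consEquiv fun _ => Fin m) _ f (fun p => rfl)),
    Fintype.sum_prod_type]
  rfl

end aux

noncomputable def gExp {m : ℕ} (τ : Fin m → ℕ) (n : ℕ) (i : Fin m) : ℝ :=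
  ∑ ω : Fin n → Fin m, seqProb τ ω * (deg τ ω i : ℝ)

noncomputable def gMix {m : ℕ} (τ : Fin m → ℕ) (n : ℕ) (i j : Fin m) : ℝ :=
  ∑ ω : Fin n → Fin m, seqProb τ ω * ((deg τ ω i : ℝ) * (deg τ ω j : ℝ))

section g
variable {m : ℕ}

lemma gExp_succ (τ : Fin m → ℕ) (n : ℕ) (i : Fin m) :
    gExp τ (n+1) i = ∑ a, ((τ a : ℝ) / ((∑ x, τ x : ℕ) : ℝ)) *
      gExp (fun x => τ x + if x = a then 1 else 0) n i := by
  unfold gExp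
  rw [sum_pi_succ]
  refine Finset.sum_congr rfl fun a _ => ?_
  rw [Finset.mul_sum]
  refine Finset.sum_congr rfl fun ω _ => ?_
  rw [seqProb_cons, deg_cons]
  ring

lemma gMix_succ (τ : Fin m → ℕ) (n : ℕ) (i j : Fin m) :
    gMix τ (n+1) i j = ∑ a, ((τ a : ℝ) / ((∑ x, τ x : ℕ) : ℝ)) *
      gMix (fun x => τ x + if x = a then 1 else 0) n i j := by
  unfold gMix
  rw [sum_pi_succ]
  refine Finset.sum_congr rfl fun a _ => ?_
  rw [Finset.mul_sum]
  refine Finset.sum_congr rfl fun ω _ => ?_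
  rw [seqProb_cons, deg_cons, deg_cons]
  ring

lemma gExp_zero (τ : Fin m → ℕ) (i : Fin m) : gExp τ 0 i = (τ i : ℝ) := by
  unfold gExp
  rw [Fintype.sum_unique]
  simp [seqProb, deg, leafCount]

lemma gMix_zero (τ : Fin m → ℕ) (i j : Fin m) : gMix τ 0 i j = (τ i : ℝ) * (τ j : ℝ) := by
  unfold gMix
  rw [Fintype.sum_unique]
  simp [seqProb, deg, leafCount]

lemma gExp_eq (n : ℕ) : ∀ (τ : Fin m → ℕ), 0 < ∑ x, τ x → ∀ i : Fin m,
    gExp τ n i = (τ i : ℝ) * (((∑ x, τ x : ℕ) : ℝ) + n) / ((∑ x, τ x : ℕ) : ℝ) := by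
  induction n with
  | zero =>
    intro τ hτ i
    have hS : (∑ x, (τ x : ℝ)) ≠ 0 := by
      rw [← Nat.cast_sum]
      exact_mod_cast hτ.ne'
    rw [gExp_zero]
    push_cast
    field_simp
    ring
  | succ n ih =>
    intro τ hτ i
    have hS : (∑ x, (τ x : ℝ)) ≠ 0 := by
      rw [← Nat.cast_sum]
      exact_mod_cast hτ.ne'
    have hS1 : (∑ x, (τ x : ℝ)) + 1 ≠ 0 := by
      have : (0:ℝ) ≤ ∑ x, (τ x : ℝ) := Finset.sum_nonneg fun x _ => by positivity
      nlinarith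
    have hrw : ∀ a : Fin m, gExp (fun x => τ x + if x = a then 1 else 0) n i
        = ((τ i : ℝ) + if i = a then 1 else 0) * ((∑ x, (τ x : ℝ)) + 1 + n) /
          ((∑ x, (τ x : ℝ)) + 1) := by
      intro a
      rw [ih _ (by rw [sum_update]; omega), sum_update]
      rcases eq_or_ne i a with h | h <;> simp [h] <;> push_cast <;> ring
    rw [gExp_succ]
    simp_rw [hrw]
    have hsum : ∑ a, (τ a : ℝ) * ((τ i : ℝ) + if i = a then 1 else 0)
        = (∑ x, (τ x : ℝ)) * τ i + τ i := by
      simp_rw [mul_add]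
      rw [Finset.sum_add_distrib]
      congr 1
      · rw [← Finset.sum_mul]
      · simp
    calc ∑ a, ((τ a : ℝ) / ((∑ x, τ x : ℕ) : ℝ)) *
          (((τ i : ℝ) + if i = a then 1 else 0) * ((∑ x, (τ x : ℝ)) + 1 + n) /
            ((∑ x, (τ x : ℝ)) + 1))
        = (∑ a, (τ a : ℝ) * ((τ i : ℝ) + if i = a then 1 else 0)) *
            (((∑ x, (τ x : ℝ)) + 1 + n) / ((∑ x, (τ x : ℝ)) * ((∑ x, (τ x : ℝ)) + 1))) := by
          rw [Finset.sum_mul]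
          refine Finset.sum_congr rfl fun a _ => ?_
          push_cast
          field_simp
      _ = (τ i : ℝ) * (((∑ x, τ x : ℕ) : ℝ) + (n+1)) / ((∑ x, τ x : ℕ) : ℝ) := by
          rw [hsum]
          push_cast
          field_simp
          ring
    push_cast
    ring

lemma gMix_eq (n : ℕ) : ∀ (τ : Fin m → ℕ), 0 < ∑ x, τ x → ∀ i j : Fin m, i ≠ j →
    gMix τ n i j = (τ i : ℝ) * (τ j : ℝ) * ((((∑ x, τ x : ℕ) : ℝ) + n) *
      (((∑ x, τ x : ℕ) : ℝ) + n + 1)) /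
      (((∑ x, τ x : ℕ) : ℝ) * (((∑ x, τ x : ℕ) : ℝ) + 1)) := by
  induction n with
  | zero =>
    intro τ hτ i j hij
    have hS : (∑ x, (τ x : ℝ)) ≠ 0 := by
      rw [← Nat.cast_sum]
      exact_mod_cast hτ.ne'
    have hS1 : (∑ x, (τ x : ℝ)) + 1 ≠ 0 := by
      have : (0:ℝ) ≤ ∑ x, (τ x : ℝ) := Finset.sum_nonneg fun x _ => by positivity
      nlinarith
    rw [gMix_zero]
    push_cast
    field_simp
    ring
  | succ n ih =>
    intro τ hτ i j hij
    have hS : (∑ x, (τ x : ℝ)) ≠ 0 := by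
      rw [← Nat.cast_sum]
      exact_mod_cast hτ.ne'
    have hnn : (0:ℝ) ≤ ∑ x, (τ x : ℝ) := Finset.sum_nonneg fun x _ => by positivity
    have hS1 : (∑ x, (τ x : ℝ)) + 1 ≠ 0 := by nlinarith
    have hS2 : (∑ x, (τ x : ℝ)) + 2 ≠ 0 := by nlinarith
    have hrw : ∀ a : Fin m, gMix (fun x => τ x + if x = a then 1 else 0) n i j
        = ((τ i : ℝ) + if i = a then 1 else 0) * ((τ j : ℝ) + if j = a then 1 else 0) *
            (((∑ x, (τ x : ℝ)) + 1 + n) * ((∑ x, (τ x : ℝ)) + 1 + n + 1)) /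
            (((∑ x, (τ x : ℝ)) + 1) * ((∑ x, (τ x : ℝ)) + 2)) := by
      intro a
      rw [ih _ (by rw [sum_update]; omega) i j hij, sum_update]
      rcases eq_or_ne i a with h | h
      · rcases eq_or_ne j a with h' | h'
        · exact absurd (h.trans h'.symm) hij
        · simp [h, h']
          push_cast
          ring
      · rcases eq_or_ne j a with h' | h'
        · simp [h, h']
          push_cast
          ring
        · simp [h, h']
          push_cast
          ring
    rw [gMix_succ]
    simp_rw [hrw]
    have hsum : ∑ a, (τ a : ℝ) * (((τ i : ℝ) + if i = a then 1 else 0) *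
          ((τ j : ℝ) + if j = a then 1 else 0))
        = ((∑ x, (τ x : ℝ)) + 2) * ((τ i : ℝ) * τ j) := by
      have hterm : ∀ a : Fin m, (τ a : ℝ) * (((τ i : ℝ) + if i = a then 1 else 0) *
            ((τ j : ℝ) + if j = a then 1 else 0))
          = (τ a : ℝ) * ((τ i : ℝ) * τ j) + (if i = a then (τ a : ℝ) * τ j else 0)
            + (if j = a then (τ a : ℝ) * τ i else 0) := by
        intro a
        rcases eq_or_ne i a with h | h
        · rcases eq_or_ne j a with h' | h'
          · exact absurd (h.trans h'.symm) hij
          · simp [h, h']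
            try ring
        · rcases eq_or_ne j a with h' | h'
          · simp [h, h']
            try ring
          · simp [h, h']
            try ring
      simp_rw [hterm]
      rw [Finset.sum_add_distrib, Finset.sum_add_distrib, ← Finset.sum_mul,
        Finset.sum_ite_eq Finset.univ i, Finset.sum_ite_eq Finset.univ j]
      simp
      ring
    calc ∑ a, ((τ a : ℝ) / ((∑ x, τ x : ℕ) : ℝ)) *
          (((τ i : ℝ) + if i = a then 1 else 0) * ((τ j : ℝ) + if j = a then 1 else 0) *
            (((∑ x, (τ x : ℝ)) + 1 + n) * ((∑ x, (τ x : ℝ)) + 1 + n + 1)) /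
            (((∑ x, (τ x : ℝ)) + 1) * ((∑ x, (τ x : ℝ)) + 2)))
        = (∑ a, (τ a : ℝ) * (((τ i : ℝ) + if i = a then 1 else 0) *
            ((τ j : ℝ) + if j = a then 1 else 0))) *
            ((((∑ x, (τ x : ℝ)) + 1 + n) * ((∑ x, (τ x : ℝ)) + 1 + n + 1)) /
              ((∑ x, (τ x : ℝ)) * (((∑ x, (τ x : ℝ)) + 1) * ((∑ x, (τ x : ℝ)) + 2)))) := by
          rw [Finset.sum_mul]
          refine Finset.sum_congr rfl fun a _ => ?_
          push_cast
          field_simp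
      _ = (τ i : ℝ) * (τ j : ℝ) * ((((∑ x, τ x : ℕ) : ℝ) + (n+1)) *
            (((∑ x, τ x : ℕ) : ℝ) + (n+1) + 1)) /
            (((∑ x, τ x : ℕ) : ℝ) * (((∑ x, τ x : ℕ) : ℝ) + 1)) := by
          rw [hsum]
          push_cast
          field_simp
          ring
    push_cast
    ring

end g
lemma sum_spineInit {m : ℕ} (hm : 2 ≤ m) : ∑ i, spineInit m i = 2 * m - 2 := by
  obtain ⟨M, rfl⟩ : ∃ M, m = M + 2 := ⟨m - 2, by omega⟩
  have : ∑ i, spineInit (M + 2) i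
      = ∑ k ∈ Finset.range (M + 2), (if k = 0 ∨ k = M + 2 - 1 then 1 else 2) := by
    rw [← Fin.sum_univ_eq_sum_range]
    rfl
  rw [this, Finset.sum_range_succ]
  have h2 : ∑ k ∈ Finset.range (M + 1), (if k = 0 ∨ k = M + 2 - 1 then 1 else 2)
      = ∑ k ∈ Finset.range (M + 1), (if k = 0 then 1 else 2) := by
    refine Finset.sum_congr rfl fun k hk => ?_
    rw [Finset.mem_range] at hk
    have : ¬ (k = M + 2 - 1) := by omega
    simp only [this, or_false]
  rw [h2, Finset.sum_range_succ']
  simp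
  omega

/-- covariances of degrees in a preferential attachment RCT with `m ≥ 3` spine
vertices: `-(n²+2(m-1)n)/((m-1)²(2m-1))` for two distinct interior vertices,
`-(n²+2(m-1)n)/(2(m-1)²(2m-1))` for an endpoint and an interior vertex, and
`-(n²+2(m-1)n)/(4(m-1)²(2m-1))` for the two endpoints. -/
theorem pa_rct_degree_covariance (m : ℕ) (hm : 3 ≤ m) (n : ℕ) (i j : Fin m) (hij : i ≠ j) :
    ((i.val ≠ 0 ∧ i.val ≠ m - 1 ∧ j.val ≠ 0 ∧ j.val ≠ m - 1) →
      degMixed m n i j - degExp m n i * degExp m n j =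
        -(((n : ℝ) ^ 2 + 2 * ((m : ℝ) - 1) * n)
          / (((m : ℝ) - 1) ^ 2 * (2 * (m : ℝ) - 1)))) ∧
    (((i.val = 0 ∨ i.val = m - 1) ∧ j.val ≠ 0 ∧ j.val ≠ m - 1) →
      degMixed m n i j - degExp m n i * degExp m n j =
        -(((n : ℝ) ^ 2 + 2 * ((m : ℝ) - 1) * n)
          / (2 * ((m : ℝ) - 1) ^ 2 * (2 * (m : ℝ) - 1)))) ∧
    (((i.val = 0 ∨ i.val = m - 1) ∧ (j.val = 0 ∨ j.val = m - 1)) →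
      degMixed m n i j - degExp m n i * degExp m n j =
        -(((n : ℝ) ^ 2 + 2 * ((m : ℝ) - 1) * n)
          / (4 * ((m : ℝ) - 1) ^ 2 * (2 * (m : ℝ) - 1)))) := by
  have hm3 : (3 : ℝ) ≤ (m : ℝ) := by exact_mod_cast hm
  have hsum : ∑ x, spineInit m x = 2 * m - 2 := sum_spineInit (by omega)
  have hpos : 0 < ∑ x, spineInit m x := by omega
  have hcast : ((∑ x, spineInit m x : ℕ) : ℝ) = 2 * (m : ℝ) - 2 := by
    rw [hsum, Nat.cast_sub (by omega)]
    push_cast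
    ring
  have hE : ∀ k : Fin m, degExp m n k
      = (spineInit m k : ℝ) * ((2 * (m : ℝ) - 2) + n) / (2 * (m : ℝ) - 2) := by
    intro k
    rw [show degExp m n k = gExp (spineInit m) n k from rfl, gExp_eq n _ hpos, hcast]
  have hM : degMixed m n i j
      = (spineInit m i : ℝ) * (spineInit m j : ℝ) *
          (((2 * (m : ℝ) - 2) + n) * ((2 * (m : ℝ) - 2) + n + 1)) /
          ((2 * (m : ℝ) - 2) * ((2 * (m : ℝ) - 2) + 1)) := by
    rw [show degMixed m n i j = gMix (spineInit m) n i j from rfl,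
      gMix_eq n _ hpos i j hij, hcast]
  have h1 : (2 * (m : ℝ) - 2) ≠ 0 := by intro h; nlinarith
  have h2 : (2 * (m : ℝ) - 2 + 1) ≠ 0 := by intro h; nlinarith
  have h3 : ((m : ℝ) - 1) ≠ 0 := by intro h; nlinarith
  have h4 : (2 * (m : ℝ) - 1) ≠ 0 := by intro h; nlinarith
  refine ⟨fun h => ?_, fun h => ?_, fun h => ?_⟩
  · have hi : spineInit m i = 2 := by simp [spineInit, h.1, h.2.1]
    have hj : spineInit m j = 2 := by simp [spineInit, h.2.2.1, h.2.2.2]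
    rw [hM, hE i, hE j, hi, hj]
    push_cast
    rw [show (2 * (m : ℝ) - 2 + 1) = 2 * (m : ℝ) - 1 by ring]
    field_simp
    ring
  · have hi : spineInit m i = 1 := by simp [spineInit, h.1]
    have hj : spineInit m j = 2 := by simp [spineInit, h.2.1, h.2.2]
    rw [hM, hE i, hE j, hi, hj]
    push_cast
    rw [show (2 * (m : ℝ) - 2 + 1) = 2 * (m : ℝ) - 1 by ring]
    field_simp
    ring
  · have hi : spineInit m i = 1 := by simp [spineInit, h.1]
    have hj : spineInit m j = 1 := by simp [spineInit, h.2]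
    rw [hM, hE i, hE j, hi, hj]
    push_cast
    rw [show (2 * (m : ℝ) - 2 + 1) = 2 * (m : ℝ) - 1 by ring]
    field_simp
    ring
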